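/- Let F be the free semigroup on three generators a, b, c, and let c₀ be the smallest congruence on F containing, for all elements x₁, x₂, x₃, x₄, x, y ∈ F, the pairs (x₁x₂x₃x₄, x₂x₃x₁x₄), (x²y, xyx), (xyx, yx²), and (yx², x³y). Then the images in the quotient F/c₀ of the six words a, b, c, a², b², c² are pairwise distinct. -/

import Mathlib

/-- All substitution instances of the identities
`x₁x₂x₃x₄ = x₂x₃x₁x₄`, `x²y = xyx`, `xyx = yx²`, `yx² = x³y`. -/
def m4Rel : FreeSemigroup (Fin 3) → FreeSemigroup (Fin 3) → Prop := fun u v =>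
  (∃ x₁ x₂ x₃ x₄ : FreeSemigroup (Fin 3),
      u = x₁ * x₂ * x₃ * x₄ ∧ v = x₂ * x₃ * x₁ * x₄) ∨
  (∃ x y : FreeSemigroup (Fin 3), u = x * x * y ∧ v = x * y * x) ∨
  (∃ x y : FreeSemigroup (Fin 3), u = x * y * x ∧ v = y * (x * x)) ∨
  (∃ x y : FreeSemigroup (Fin 3), u = y * (x * x) ∧ v = x * x * x * y)


/-- Truncated multiplication on `Option (List (Fin 3))`. -/
def tmul : Option (List (Fin 3)) → Option (List (Fin 3)) → Option (List (Fin 3))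
  | some l, some m => if l.length + m.length ≤ 2 then some (l ++ m) else none
  | _, _ => none

lemma tmul_some (l m : List (Fin 3)) :
    tmul (some l) (some m) = if l.length + m.length ≤ 2 then some (l ++ m) else none := rfl

lemma tmul_none_left (a : Option (List (Fin 3))) : tmul none a = none := rfl

lemma tmul_none_right (a : Option (List (Fin 3))) : tmul a none = none := by
  rcases a with _ | l <;> rfl

lemma tmul_assoc (a b c : Option (List (Fin 3))) :
    tmul (tmul a b) c = tmul a (tmul b c) := by
  rcases a with _ | l <;> rcases b with _ | m <;> rcases c with _ | n <;>
    try simp only [tmul_none_left, tmul_none_right]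
  rw [tmul_some l m, tmul_some m n]
  by_cases h1 : l.length + m.length ≤ 2
  · rw [if_pos h1]
    by_cases h2 : m.length + n.length ≤ 2
    · rw [if_pos h2, tmul_some, tmul_some, List.length_append, List.length_append,
        List.append_assoc, Nat.add_assoc]
    · rw [if_neg h2, tmul_none_right, tmul_some,
        if_neg (by rw [List.length_append]; omega)]
  · rw [if_neg h1, tmul_none_left]
    by_cases h2 : m.length + n.length ≤ 2
    · rw [if_pos h2, tmul_some, if_neg (by rw [List.length_append]; omega)]
    · rw [if_neg h2, tmul_none_right]

/-- Wrapper semigroup. -/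
structure T3 where
  val : Option (List (Fin 3))

instance : Semigroup T3 where
  mul a b := ⟨tmul a.val b.val⟩
  mul_assoc a b c := congrArg T3.mk (tmul_assoc a.val b.val c.val)

lemma T3.mul_def (a b : T3) : a * b = ⟨tmul a.val b.val⟩ := rfl

def fhom : FreeSemigroup (Fin 3) →ₙ* T3 :=
  FreeSemigroup.lift (fun i => ⟨some [i]⟩)

lemma fhom_shape (w : FreeSemigroup (Fin 3)) :
    fhom w = ⟨none⟩ ∨ ∃ l : List (Fin 3), l ≠ [] ∧ fhom w = ⟨some l⟩ := by
  induction w using FreeSemigroup.recOnMul with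
  | ih1 x => exact Or.inr ⟨[x], by simp, rfl⟩
  | ih2 x y hx hy =>
    rw [map_mul]
    rcases hx with hx | ⟨l, hl, hx⟩
    · left; rw [hx, T3.mul_def]; rfl
    rcases hy with hy | ⟨m, hm, hy⟩
    · left; rw [hx, hy, T3.mul_def, tmul_none_right]
    rw [hx, hy, T3.mul_def, tmul_some]
    split
    · exact Or.inr ⟨l ++ m, by simp [hl], rfl⟩
    · exact Or.inl rfl

lemma fhom_three (x y z : FreeSemigroup (Fin 3)) : fhom (x * y * z) = ⟨none⟩ := by
  rw [map_mul, map_mul]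
  rcases fhom_shape x with hx | ⟨l, hl, hx⟩
  · rw [hx, T3.mul_def, T3.mul_def]
    simp [tmul_none_left]
  rcases fhom_shape y with hy | ⟨m, hm, hy⟩
  · rw [hx, hy, T3.mul_def, T3.mul_def, tmul_none_right, tmul_none_left]
  rcases fhom_shape z with hz | ⟨n, hn, hz⟩
  · rw [hz, T3.mul_def, tmul_none_right]
  rw [hx, hy, hz, T3.mul_def, T3.mul_def]
  have hl1 : 1 ≤ l.length := List.length_pos_iff.mpr hl
  have hm1 : 1 ≤ m.length := List.length_pos_iff.mpr hm
  have hn1 : 1 ≤ n.length := List.length_pos_iff.mpr hn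
  rw [tmul_some]
  by_cases h : l.length + m.length ≤ 2
  · rw [if_pos h, tmul_some, if_neg (by rw [List.length_append]; omega)]
  · rw [if_neg h, tmul_none_left]

lemma fhom_rel {u v : FreeSemigroup (Fin 3)} (h : m4Rel u v) : fhom u = fhom v := by
  rcases h with ⟨x₁, x₂, x₃, x₄, hu, hv⟩ | ⟨x, y, hu, hv⟩ | ⟨x, y, hu, hv⟩ | ⟨x, y, hu, hv⟩ <;>
    subst hu <;> subst hv
  · rw [show x₁ * x₂ * x₃ * x₄ = x₁ * x₂ * (x₃ * x₄) from mul_assoc _ _ _,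
      show x₂ * x₃ * x₁ * x₄ = x₂ * x₃ * (x₁ * x₄) from mul_assoc _ _ _,
      fhom_three, fhom_three]
  · rw [fhom_three, fhom_three]
  · rw [show y * (x * x) = y * x * x from (mul_assoc _ _ _).symm, fhom_three, fhom_three]
  · rw [show y * (x * x) = y * x * x from (mul_assoc _ _ _).symm,
      show x * x * x * y = x * x * (x * y) from mul_assoc _ _ _, fhom_three, fhom_three]

lemma conker : conGen m4Rel ≤ Con.ker fhom :=
  Con.conGen_le.mpr fun _ _ h => fhom_rel h

lemma key {u v : FreeSemigroup (Fin 3)}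
    (h : (u : (conGen m4Rel).Quotient) = v) : fhom u = fhom v :=
  conker (Con.eq _ |>.mp h)

theorem stmt_9 :
    let a := FreeSemigroup.of (0 : Fin 3)
    let b := FreeSemigroup.of (1 : Fin 3)
    let c := FreeSemigroup.of (2 : Fin 3)
    ([a, b, c, a * a, b * b, c * c].map
        (fun w => (w : (conGen m4Rel).Quotient))).Pairwise (· ≠ ·) := by
  intro a b c
  have hval : ∀ i : Fin 3, fhom (FreeSemigroup.of i) = ⟨some [i]⟩ := fun i => rfl
  have hval2 : ∀ i : Fin 3,
      fhom (FreeSemigroup.of i * FreeSemigroup.of i) = ⟨some [i, i]⟩ := fun i => by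
    rw [map_mul, hval, T3.mul_def, tmul_some]; rfl
  show List.Pairwise (fun x1 x2 => x1 ≠ x2)
    [(a : (conGen m4Rel).Quotient), (b : (conGen m4Rel).Quotient),
      (c : (conGen m4Rel).Quotient), ((a * a : FreeSemigroup (Fin 3)) : (conGen m4Rel).Quotient),
      ((b * b : FreeSemigroup (Fin 3)) : (conGen m4Rel).Quotient),
      ((c * c : FreeSemigroup (Fin 3)) : (conGen m4Rel).Quotient)]
  simp only [List.pairwise_cons, List.mem_cons, List.not_mem_nil, List.Pairwise.nil,
    and_true, false_imp_iff, forall_eq_or_imp, forall_eq, List.mem_singleton]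
  repeat' apply And.intro
  all_goals first
    | exact fun _ => trivial
    | · intro h
        have := key h
        simp only [a, b, c, hval, hval2, T3.mk.injEq] at this
        exact absurd this (by decide)
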